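/- Linear comparison lemma: suppose δ : ℝ → ℝ is C², bounded on ℝ, and satisfies |δ''(u) + δ'(u) − 2δ(u)| ≤ C e^{−α|u|} for all u, with constants C > 0 and 0 < α (α ≠ 1, 2). Then |δ(u)| ≤ A e^{αu} + B e^{u} for u → −∞ and |δ(u)| ≤ A' e^{−αu} + B' e^{−2u} for u → +∞, for suitable constants A, B, A', B'; in particular δ(u) → 0 as u → ±∞. -/

import Mathlib

open Real Set Filter Topology

/-- Second derivative is nonneg at a local min. -/
lemma aux_second_deriv_nonneg {g g' : ℝ → ℝ} {g2 u0 : ℝ}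
    (hg : ∀ u, HasDerivAt g (g' u) u) (hg' : HasDerivAt g' g2 u0)
    (hmin : IsLocalMin g u0) : 0 ≤ g2 := by
  -- g' u0 = 0
  have hz : g' u0 = 0 := hmin.hasDerivAt_eq_zero (hg u0)
  -- find ε-neighborhood of local min
  obtain ⟨ε, hε, hloc⟩ := Metric.eventually_nhds_iff.mp hmin
  -- for each n, find c in (u0, u0 + min (ε/2) (1/(n+1))) with g' c ≥ 0
  have key : ∀ n : ℕ, ∃ c, c ∈ Ioo u0 (u0 + min (ε/2) (1/(n+1))) ∧ 0 ≤ g' c := by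
    intro n
    have hpos : (0:ℝ) < min (ε/2) (1/(n+1)) := by
      apply lt_min (by linarith)
      positivity
    have hab : u0 < u0 + min (ε/2) (1/(n+1)) := by linarith
    obtain ⟨c, hc, hc'⟩ := exists_hasDerivAt_eq_slope g g' hab
      (fun x _ => (hg x).continuousAt.continuousWithinAt) (fun x _ => hg x)
    refine ⟨c, hc, ?_⟩
    rw [hc']
    have hge : g u0 ≤ g (u0 + min (ε/2) (1/(n+1))) := by
      apply hloc
      rw [Real.dist_eq, add_sub_cancel_left, abs_of_nonneg hpos.le]
      calc min (ε/2) (1/(n+1)) ≤ ε/2 := min_le_left _ _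
        _ < ε := by linarith
    apply div_nonneg (by linarith) (by linarith)
  choose c hc hc' using key
  -- c n → u0 within {u0}ᶜ
  have hct : Tendsto c atTop (𝓝[≠] u0) := by
    rw [tendsto_nhdsWithin_iff]
    constructor
    · apply tendsto_of_tendsto_of_tendsto_of_le_of_le (g := fun _ => u0)
        (h := fun n : ℕ => u0 + min (ε/2) (1/(n+1)))
        tendsto_const_nhds
      · have h1 : Tendsto (fun n : ℕ => (1:ℝ)/(n+1)) atTop (𝓝 0) :=
          tendsto_one_div_add_atTop_nhds_zero_nat
        have h2 : Tendsto (fun n : ℕ => min (ε/2) (1/(n+1))) atTop (𝓝 0) := by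
          apply squeeze_zero (fun n => le_min (by linarith) (by positivity))
            (fun n => min_le_right _ _) h1
        have := h2.const_add u0
        simpa using this
      · exact fun n => (hc n).1.le
      · exact fun n => (hc n).2.le
    · exact Eventually.of_forall fun n => ne_of_gt (hc n).1
  -- slope of g' tends to g2
  have hslope : Tendsto (slope g' u0) (𝓝[≠] u0) (𝓝 g2) :=
    hasDerivAt_iff_tendsto_slope.mp hg'
  have hcomp : Tendsto (fun n => slope g' u0 (c n)) atTop (𝓝 g2) := hslope.comp hct
  apply ge_of_tendsto hcomp
  apply Eventually.of_forall
  intro n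
  rw [slope_def_field, hz, sub_zero]
  exact div_nonneg (hc' n) (by linarith [(hc n).1])

/-- Maximum principle on `[0, ∞)` for the operator `D² + b D - 2` with `b ≤ 1`. -/
lemma aux_maxprin (b : ℝ) (hb : b ≤ 1) (g g' g'' : ℝ → ℝ)
    (hg : ∀ u, HasDerivAt g (g' u) u) (hg' : ∀ u, HasDerivAt g' (g'' u) u)
    (M : ℝ) (hM : ∀ u, 0 ≤ u → -M ≤ g u)
    (h0 : 0 ≤ g 0)
    (hL : ∀ u, 0 ≤ u → g'' u + b * g' u - 2 * g u ≤ 0) :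
    ∀ u, 0 ≤ u → 0 ≤ g u := by
  have hE : ∀ u : ℝ, HasDerivAt (fun x => Real.exp (x/2)) (Real.exp (u/2) * (1/2)) u := by
    intro u
    have h1 : HasDerivAt (fun x : ℝ => x/2) (1/2) u := (hasDerivAt_id u).div_const 2
    simpa [Function.comp_def] using (Real.hasDerivAt_exp (u/2)).comp u h1
  -- main claim with ε-perturbation
  have main : ∀ ε : ℝ, 0 < ε → ∀ u, 0 ≤ u → 0 ≤ g u + ε * Real.exp (u/2) := by
    intro ε hε
    by_contra hcon
    push_neg at hcon
    obtain ⟨u1, hu1, hu1'⟩ := hcon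
    set G : ℝ → ℝ := fun u => g u + ε * Real.exp (u/2) with hG
    set G' : ℝ → ℝ := fun u => g' u + ε * (Real.exp (u/2) * (1/2)) with hG'
    have hGd : ∀ u, HasDerivAt G (G' u) u := fun u => (hg u).add ((hE u).const_mul ε)
    have hGd' : ∀ u, HasDerivAt G' (g'' u + ε * (Real.exp (u/2) * (1/2) * (1/2))) u := by
      intro u
      apply (hg' u).add
      have : HasDerivAt (fun x => Real.exp (x/2) * (1/2)) (Real.exp (u/2) * (1/2) * (1/2)) u :=
        (hE u).mul_const (1/2)
      simpa [mul_assoc] using this.const_mul ε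
    -- choose R far enough
    set R : ℝ := max u1 (2 * Real.log ((max M 0 + 1)/ε)) with hR
    have hRu1 : u1 ≤ R := le_max_left _ _
    have hR0 : 0 ≤ R := le_trans hu1 hRu1
    have hGR : 0 < G R := by
      have h1 : (max M 0 + 1)/ε ≤ Real.exp (R/2) := by
        calc (max M 0 + 1)/ε ≤ Real.exp (Real.log ((max M 0 + 1)/ε)) := Real.le_exp_log _
          _ ≤ Real.exp (R/2) := by
              apply Real.exp_le_exp.2
              have := le_max_right u1 (2 * Real.log ((max M 0 + 1)/ε))
              linarith
      have h2 : max M 0 + 1 ≤ ε * Real.exp (R/2) := by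
        rw [div_le_iff₀ hε] at h1
        linarith [h1]
      have h3 : -M ≤ g R := hM R hR0
      have h4 : M ≤ max M 0 := le_max_left _ _
      simp only [hG]
      nlinarith
    -- continuity of G
    have hGc : Continuous G := continuous_iff_continuousAt.2 fun u => (hGd u).continuousAt
    obtain ⟨u0, hu0mem, hu0min⟩ := (isCompact_Icc (a := (0:ℝ)) (b := R)).exists_isMinOn
      ⟨0, left_mem_Icc.2 hR0⟩ hGc.continuousOn
    have hGu0 : G u0 < 0 := lt_of_le_of_lt (hu0min ⟨hu1, hRu1⟩) hu1'
    have hG0 : 0 < G 0 := by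
      simp only [hG]
      have : Real.exp ((0:ℝ)/2) = 1 := by norm_num
      rw [this]
      linarith
    have hne0 : u0 ≠ 0 := fun h => by rw [h] at hGu0; linarith
    have hneR : u0 ≠ R := fun h => by rw [h] at hGu0; linarith
    have hu0Ioo : u0 ∈ Ioo (0:ℝ) R :=
      ⟨lt_of_le_of_ne hu0mem.1 (Ne.symm hne0), lt_of_le_of_ne hu0mem.2 hneR⟩
    have hlocmin : IsLocalMin G u0 := hu0min.isLocalMin (Icc_mem_nhds hu0Ioo.1 hu0Ioo.2)
    have hz : G' u0 = 0 := hlocmin.hasDerivAt_eq_zero (hGd u0)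
    have h2nn : 0 ≤ g'' u0 + ε * (Real.exp (u0/2) * (1/2) * (1/2)) :=
      aux_second_deriv_nonneg hGd (hGd' u0) hlocmin
    have hLu0 := hL u0 hu0Ioo.1.le
    have hexp : 0 < Real.exp (u0/2) := Real.exp_pos _
    simp only [hG, hG'] at hGu0 hz
    nlinarith [mul_pos hε hexp, mul_nonneg (by linarith : (0:ℝ) ≤ 1 - b) (mul_pos hε hexp).le]
  intro u hu
  by_contra hneg
  push_neg at hneg
  have hεpos : 0 < -g u / (2 * Real.exp (u/2)) := div_pos (by linarith) (by positivity)
  have h1 := main _ hεpos u hu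
  have h2 : -g u / (2 * Real.exp (u/2)) * Real.exp (u/2) = -g u / 2 := by
    field_simp
  rw [h2] at h1
  linarith

/-- Comparison bound on the half line `[0, ∞)` for `D² + b D - 2`. -/
lemma aux_half_bound (b c C M k r : ℝ) (hb1 : b ≤ 1) (hc : 0 ≤ c) (hC : 0 ≤ C)
    (hk : k = c^2 - b*c - 2) (hk0 : k ≠ 0)
    (hr : r^2 + b*r - 2 = 0) (hr0 : r ≤ 0)
    (f f' f'' : ℝ → ℝ)
    (hf : ∀ u, HasDerivAt f (f' u) u) (hf' : ∀ u, HasDerivAt f' (f'' u) u)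
    (hM : ∀ u, |f u| ≤ M)
    (hest : ∀ u, 0 ≤ u → |f'' u + b * f' u - 2 * f u| ≤ C * Real.exp (-c * u)) :
    ∀ u, 0 ≤ u → |f u| ≤ (-C/k) * Real.exp (-c*u) + (M + C/|k|) * Real.exp (r*u) := by
  set A : ℝ := -C/k with hA
  set B : ℝ := M + C/|k| with hB
  have hMnn : 0 ≤ M := le_trans (abs_nonneg _) (hM 0)
  have hAB : 0 ≤ A + C/|k| := by
    rcases lt_or_gt_of_ne hk0 with hneg | hpos
    · rw [abs_of_neg hneg, hA]
      have h1 : 0 ≤ -C/k := by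
        rw [div_nonneg_iff]
        right
        exact ⟨by linarith, hneg.le⟩
      have h2 : 0 ≤ C/(-k) := div_nonneg hC (by linarith)
      linarith
    · rw [abs_of_pos hpos, hA]
      have : -C/k + C/k = 0 := by ring
      linarith
  have hexp : ∀ (s u : ℝ), HasDerivAt (fun x => Real.exp (s*x)) (s * Real.exp (s*u)) u := by
    intro s u
    have h1 : HasDerivAt (fun x : ℝ => s*x) s u := by
      simpa using (hasDerivAt_id u).const_mul s
    simpa [mul_comm, Function.comp_def] using (Real.hasDerivAt_exp (s*u)).comp u h1
  have hAk : A * k = -C := div_mul_cancel₀ _ hk0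
  have hLv : ∀ u : ℝ,
      (A * (-c * (-c * Real.exp (-c*u))) + B * (r * (r * Real.exp (r*u))))
      + b * (A * (-c * Real.exp (-c*u)) + B * (r * Real.exp (r*u)))
      - 2 * (A * Real.exp (-c*u) + B * Real.exp (r*u)) = -C * Real.exp (-c*u) := by
    intro u
    linear_combination Real.exp (-c*u) * hAk + B * Real.exp (r*u) * hr
      - A * Real.exp (-c*u) * hk
  have one : ∀ (φ φ' φ'' : ℝ → ℝ), (∀ u, HasDerivAt φ (φ' u) u) →
      (∀ u, HasDerivAt φ' (φ'' u) u) → (∀ u, |φ u| ≤ M) →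
      (∀ u, 0 ≤ u → |φ'' u + b * φ' u - 2 * φ u| ≤ C * Real.exp (-c * u)) →
      ∀ u, 0 ≤ u → φ u ≤ A * Real.exp (-c*u) + B * Real.exp (r*u) := by
    intro φ φ' φ'' hφ hφ' hφM hφest
    have key := aux_maxprin b hb1
      (fun u => A * Real.exp (-c*u) + B * Real.exp (r*u) - φ u)
      (fun u => A * (-c * Real.exp (-c*u)) + B * (r * Real.exp (r*u)) - φ' u)
      (fun u => A * (-c * (-c * Real.exp (-c*u))) + B * (r * (r * Real.exp (r*u))) - φ'' u)
      (fun u => (((hexp (-c) u).const_mul A).add ((hexp r u).const_mul B)).sub (hφ u))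
      (fun u => ((((hexp (-c) u).const_mul (-c)).const_mul A).add
        (((hexp r u).const_mul r).const_mul B)).sub (hφ' u))
      (|A| + |B| + M)
      (by
        intro u hu
        have e1pos : 0 < Real.exp (-c*u) := Real.exp_pos _
        have e2pos : 0 < Real.exp (r*u) := Real.exp_pos _
        have e1le : Real.exp (-c*u) ≤ 1 := Real.exp_le_one_iff.2 (by nlinarith)
        have e2le : Real.exp (r*u) ≤ 1 := Real.exp_le_one_iff.2 (by nlinarith)
        have hφu := (abs_le.mp (hφM u)).2
        have h1 : -|A| ≤ A * Real.exp (-c*u) := by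
          nlinarith [neg_abs_le A, abs_nonneg A]
        have h2 : -|B| ≤ B * Real.exp (r*u) := by
          nlinarith [neg_abs_le B, abs_nonneg B]
        linarith)
      (by
        simp only [mul_zero, neg_zero, Real.exp_zero, mul_one]
        have := (abs_le.mp (hφM 0)).2
        simp only [hB] at *
        linarith)
      (by
        intro u hu
        have h1 := (abs_le.mp (hφest u hu)).1
        have h2 := hLv u
        linarith)
    intro u hu
    have := key u hu
    linarith
  intro u hu
  have h1 := one f f' f'' hf hf' hM hest u hu
  have h2 := one (fun u => -f u) (fun u => -f' u) (fun u => -f'' u)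
    (fun u => (hf u).neg) (fun u => (hf' u).neg)
    (fun u => by rw [abs_neg]; exact hM u)
    (fun u hu => by
      rw [show -f'' u + b * -f' u - 2 * -f u = -(f'' u + b * f' u - 2 * f u) by ring, abs_neg]
      exact hest u hu) u hu
  rw [abs_le]
  constructor <;> linarith

/-- linear comparison lemma: if `δ` is `C²`, bounded on `ℝ`, with
`|δ'' + δ' − 2δ| ≤ C e^{−α|u|}` (with `0 < α`, `α ≠ 1, 2`), then `|δ|` decays like
`A e^{αu} + B e^{u}` at `−∞` and like `A' e^{−αu} + B' e^{−2u}` at `+∞`; in particular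
`δ(u) → 0` as `u → ±∞`. -/
theorem stmt16 (α C : ℝ) (hα : 0 < α) (hα1 : α ≠ 1) (hα2 : α ≠ 2) (hC : 0 < C)
    (δ d d2 : ℝ → ℝ)
    (hd : ∀ u : ℝ, HasDerivAt δ (d u) u)
    (hd2 : ∀ u : ℝ, HasDerivAt d (d2 u) u)
    (hbd : ∃ M : ℝ, ∀ u : ℝ, |δ u| ≤ M)
    (hest : ∀ u : ℝ, |d2 u + d u - 2 * δ u| ≤ C * Real.exp (-α * |u|)) :
    (∃ A B : ℝ, ∀ᶠ u in atBot, |δ u| ≤ A * Real.exp (α * u) + B * Real.exp u) ∧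
    (∃ A' B' : ℝ, ∀ᶠ u in atTop, |δ u| ≤ A' * Real.exp (-α * u) + B' * Real.exp (-2 * u)) ∧
    Tendsto δ atBot (nhds 0) ∧ Tendsto δ atTop (nhds 0) := by
  obtain ⟨M, hM⟩ := hbd
  -- the + side
  have hk1 : α^2 - (1:ℝ)*α - 2 ≠ 0 := by
    intro h
    have h2 : (α - 2)*(α + 1) = 0 := by linear_combination h
    rcases mul_eq_zero.mp h2 with h3 | h3
    · exact hα2 (by linarith)
    · linarith
  have htop := aux_half_bound 1 α C M (α^2 - (1:ℝ)*α - 2) (-2) le_rfl hα.le hC.le rfl hk1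
    (by norm_num) (by norm_num) δ d d2 hd hd2 hM
    (fun u hu => by simpa [abs_of_nonneg hu] using hest u)
  -- the − side: reflected function
  have hk2 : α^2 - (-1:ℝ)*α - 2 ≠ 0 := by
    intro h
    have h2 : (α - 1)*(α + 2) = 0 := by linear_combination h
    rcases mul_eq_zero.mp h2 with h3 | h3
    · exact hα1 (by linarith)
    · linarith
  have hf : ∀ u : ℝ, HasDerivAt (fun x => δ (-x)) (-d (-u)) u := by
    intro u
    have := (hd (-u)).comp u (hasDerivAt_neg u)
    simpa [Function.comp_def] using this
  have hf' : ∀ u : ℝ, HasDerivAt (fun x => -d (-x)) (d2 (-u)) u := by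
    intro u
    have := ((hd2 (-u)).comp u (hasDerivAt_neg u)).neg
    simpa [Function.comp_def, Pi.neg_def] using this
  have hbot := aux_half_bound (-1) α C M (α^2 - (-1:ℝ)*α - 2) (-1) (by norm_num) hα.le hC.le
    rfl hk2 (by norm_num) (by norm_num)
    (fun x => δ (-x)) (fun x => -d (-x)) (fun x => d2 (-x)) hf hf'
    (fun u => hM (-u))
    (fun u hu => by
      have h1 := hest (-u)
      rw [abs_neg, abs_of_nonneg hu] at h1
      rw [show d2 (-u) + -1 * -d (-u) - 2 * δ (-u) = d2 (-u) + d (-u) - 2 * δ (-u) by ring]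
      exact h1)
  -- eventual bounds
  have hbotE : ∀ᶠ w in atBot,
      |δ w| ≤ (-C/(α^2 - (-1:ℝ)*α - 2)) * Real.exp (α * w)
        + (M + C/|α^2 - (-1:ℝ)*α - 2|) * Real.exp w := by
    rw [eventually_atBot]
    refine ⟨0, fun w hw => ?_⟩
    have h1 := hbot (-w) (by linarith)
    simpa [neg_mul_neg] using h1
  have htopE : ∀ᶠ u in atTop,
      |δ u| ≤ (-C/(α^2 - (1:ℝ)*α - 2)) * Real.exp (-α * u)
        + (M + C/|α^2 - (1:ℝ)*α - 2|) * Real.exp (-2 * u) := by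
    rw [eventually_atTop]
    exact ⟨0, fun u hu => htop u hu⟩
  -- limits
  have hlin_bot : Tendsto (fun w : ℝ => α * w) atBot atBot :=
    (tendsto_const_mul_atBot_of_pos hα).2 tendsto_id
  have hlin_top : Tendsto (fun u : ℝ => -α * u) atTop atBot :=
    (tendsto_const_mul_atBot_of_neg (by linarith : -α < 0)).2 tendsto_id
  have hlin_top2 : Tendsto (fun u : ℝ => (-2:ℝ) * u) atTop atBot :=
    (tendsto_const_mul_atBot_of_neg (by norm_num : (-2:ℝ) < 0)).2 tendsto_id
  have hrhs_bot : Tendsto (fun w => (-C/(α^2 - (-1:ℝ)*α - 2)) * Real.exp (α * w)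
      + (M + C/|α^2 - (-1:ℝ)*α - 2|) * Real.exp w) atBot (𝓝 0) := by
    have t1 := (Real.tendsto_exp_atBot.comp hlin_bot).const_mul (-C/(α^2 - (-1:ℝ)*α - 2))
    have t2 := Real.tendsto_exp_atBot.const_mul (M + C/|α^2 - (-1:ℝ)*α - 2|)
    simpa using t1.add t2
  have hrhs_top : Tendsto (fun u => (-C/(α^2 - (1:ℝ)*α - 2)) * Real.exp (-α * u)
      + (M + C/|α^2 - (1:ℝ)*α - 2|) * Real.exp (-2 * u)) atTop (𝓝 0) := by
    have t1 := (Real.tendsto_exp_atBot.comp hlin_top).const_mul (-C/(α^2 - (1:ℝ)*α - 2))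
    have t2 := (Real.tendsto_exp_atBot.comp hlin_top2).const_mul
      (M + C/|α^2 - (1:ℝ)*α - 2|)
    simpa using t1.add t2
  refine ⟨⟨_, _, hbotE⟩, ⟨_, _, htopE⟩, ?_, ?_⟩
  · exact squeeze_zero_norm' (by simpa [Real.norm_eq_abs] using hbotE) hrhs_bot
  · exact squeeze_zero_norm' (by simpa [Real.norm_eq_abs] using htopE) hrhs_top
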